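/- Every finite chain ring R (finite ring whose left ideals form a chain) is semi-commutative: for all a, b ∈ R with ab = 0, we have a·d·b = 0 for every d ∈ R. -/
import Mathlib


/-- A finite chain ring (finite ring whose left ideals form a chain) is
semi-commutative: `a * b = 0` implies `a * d * b = 0` for all `d`. -/
theorem finite_chain_ring_semicommutative {R : Type*} [Ring R] [Fintype R]
    (hchain : ∀ I J : Ideal R, I ≤ J ∨ J ≤ I) :
    ∀ a b : R, a * b = 0 → ∀ d : R, a * d * b = 0 := by
  intro a b hab d
  -- right multiplication by `d` is a left-linear map
  have key : a * d ∈ Ideal.span {a} := by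
    rcases hchain (Ideal.span {a * d}) (Ideal.span {a}) with h | h
    · exact h (Ideal.subset_span rfl)
    · set f : R →ₗ[R] R :=
        { toFun := fun x => x * d
          map_add' := fun x y => add_mul x y d
          map_smul' := fun r x => by simp [smul_eq_mul, mul_assoc] } with hf
      have hmap : Submodule.map f (Ideal.span {a}) = Ideal.span {a * d} := by
        rw [Ideal.span, Submodule.map_span, Set.image_singleton]
        rfl
      have himg : ((Ideal.span {a * d} : Ideal R) : Set R)
          = f '' ((Ideal.span {a} : Ideal R) : Set R) := by
        rw [← hmap, Submodule.map_coe]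
      have hsub : ((Ideal.span {a} : Ideal R) : Set R)
          ⊆ ((Ideal.span {a * d} : Ideal R) : Set R) := h
      have hcard : ((Ideal.span {a * d} : Ideal R) : Set R).ncard
          ≤ ((Ideal.span {a} : Ideal R) : Set R).ncard := by
        rw [himg]
        exact Set.ncard_image_le (Set.toFinite _)
      have heq : ((Ideal.span {a} : Ideal R) : Set R)
          = ((Ideal.span {a * d} : Ideal R) : Set R) :=
        Set.eq_of_subset_of_ncard_le hsub hcard (Set.toFinite _)
      have : a * d ∈ ((Ideal.span {a} : Ideal R) : Set R) := by
        rw [heq]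
        exact Ideal.subset_span rfl
      exact this
  obtain ⟨r, hr⟩ := Submodule.mem_span_singleton.mp key
  have : a * d * b = r * (a * b) := by
    rw [← hr, smul_eq_mul, mul_assoc]
  rw [this, hab, mul_zero]
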